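/- Let g ∈ G = A ∗_C B have a reduced form g = c₀·p₁⋯p_k with k ≥ 1, and let c ∈ C satisfy g c g⁻¹ ∈ C. Then for every i ∈ {1, …, k} the element (p_i p_{i+1}⋯p_k) c (p_i p_{i+1}⋯p_k)⁻¹ lies in C. Moreover, if c ≠ 1, then for every i one has C ∩ p_i⁻¹ C p_i ≠ {1} (each syllable p_i lies in the generalized normalizer of C in its factor), and there exists q ∈ (A ∪ B) ∖ C with q c q⁻¹ ∈ C. -/

import Mathlib

open Monoid

universe u

/-- The two factors of the amalgam, indexed by `Bool`. -/
def Fac (A B : Type u) : Bool → Type u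
  | true => A
  | false => B

instance FacGroup (A B : Type u) [Group A] [Group B] : (b : Bool) → Group (Fac A B b)
  | true => inferInstanceAs (Group A)
  | false => inferInstanceAs (Group B)

variable {A B C : Type u} [Group A] [Group B] [Group C]

/-- The family of monomorphisms `C → A`, `C → B`. -/
def amalgHom (φ : C →* A) (ψ : C →* B) : (b : Bool) → C →* Fac A B b
  | true => φ
  | false => ψ

variable (φ : C →* A) (ψ : C →* B)

/-- The amalgamated free product `G = A ∗_C B`, i.e. the pushout of `φ` and `ψ`. -/
abbrev Amalg : Type u := Monoid.PushoutI (amalgHom φ ψ)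

/-- The factor `A`, identified with its image in `G = A ∗_C B`. -/
def facA : Subgroup (Amalg φ ψ) := (Monoid.PushoutI.of (φ := amalgHom φ ψ) true).range

/-- The factor `B`, identified with its image in `G = A ∗_C B`. -/
def facB : Subgroup (Amalg φ ψ) := (Monoid.PushoutI.of (φ := amalgHom φ ψ) false).range

/-- The amalgamated subgroup `C`, identified with its image in `G = A ∗_C B`. -/
def amalgC : Subgroup (Amalg φ ψ) := (Monoid.PushoutI.base (amalgHom φ ψ)).range

/-- `c * g₁ ⋯ gₙ` (with the list `L = [g₁, …, gₙ]`) is a reduced form: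
`c ∈ C`, each `gᵢ ∈ (A ∪ B) ∖ C`, and consecutive letters lie in different factors. -/
def ReducedForm (c : Amalg φ ψ) (L : List (Amalg φ ψ)) : Prop :=
  c ∈ amalgC φ ψ ∧
  (∀ x ∈ L, (x ∈ facA φ ψ ∨ x ∈ facB φ ψ) ∧ x ∉ amalgC φ ψ) ∧
  L.Chain' (fun x y => (x ∈ facA φ ψ → y ∈ facB φ ψ) ∧ (x ∈ facB φ ψ → y ∈ facA φ ψ))

/-- A reduced form `c * g₁ ⋯ gₙ` is cyclically reduced if `n = 0`, or `n = 1` and the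
element is not conjugate to an element of `C`, or `n ≥ 2` and `g₁`, `gₙ` lie in different
factors. -/
def CyclicallyReducedForm (c : Amalg φ ψ) (L : List (Amalg φ ψ)) : Prop :=
  ReducedForm φ ψ c L ∧
  (L.length = 0 ∨
    (L.length = 1 ∧ ∀ x : Amalg φ ψ, x⁻¹ * (c * L.prod) * x ∉ amalgC φ ψ) ∨
    (2 ≤ L.length ∧ ∀ x y : Amalg φ ψ, x ∈ L.head? → y ∈ L.getLast? →
      ((x ∈ facA φ ψ → y ∈ facB φ ψ) ∧ (x ∈ facB φ ψ → y ∈ facA φ ψ))))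

/-- An element of `G = A ∗_C B` is cyclically reduced if it has a cyclically reduced
reduced form. -/
def CyclicallyReduced (g : Amalg φ ψ) : Prop :=
  ∃ (c : Amalg φ ψ) (L : List (Amalg φ ψ)), g = c * L.prod ∧ CyclicallyReducedForm φ ψ c L

namespace AmalgAux

open Monoid PushoutI List

variable {A B C : Type u} [Group A] [Group B] [Group C]
variable (φ : C →* A) (ψ : C →* B)

/-- The factor of index `b`. -/
def fc (b : Bool) : Subgroup (Amalg φ ψ) := (PushoutI.of (φ := amalgHom φ ψ) b).range

/-- The typing predicate: `x` is a letter of factor `b` not in `C`. -/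
def Ty (x : Amalg φ ψ) (b : Bool) : Prop := x ∈ fc φ ψ b ∧ x ∉ amalgC φ ψ

lemma amalgC_le (b : Bool) : amalgC φ ψ ≤ fc φ ψ b := by
  rintro x ⟨c, rfl⟩
  exact ⟨amalgHom φ ψ b c, PushoutI.of_apply_eq_base (amalgHom φ ψ) b c⟩

variable {φ ψ}

lemma hinj (hφ : Function.Injective φ) (hψ : Function.Injective ψ) :
    ∀ b, Function.Injective (amalgHom φ ψ b) := fun b => by
  cases b with
  | true => exact hφ
  | false => exact hψ

lemma exists_word {L : List (Amalg φ ψ)} {bs : List Bool}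
    (h : List.Forall₂ (Ty φ ψ) L bs) (hch : bs.Chain' (· ≠ ·)) :
    ∃ w : Monoid.CoprodI.Word (Fac A B), PushoutI.Reduced (amalgHom φ ψ) w ∧
      PushoutI.ofCoprodI w.prod = L.prod ∧ w.toList.map Sigma.fst = bs := by
  induction h with
  | nil =>
    exact ⟨.empty, fun g hg => by simp [Monoid.CoprodI.Word.empty] at hg, by simp, rfl⟩
  | @cons x b L' bs' hxb htail ih =>
    obtain ⟨hhead, hch'⟩ := List.isChain_cons.mp hch
    obtain ⟨w, hred, hprod, hmap⟩ := ih hch'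
    obtain ⟨a, ha⟩ := hxb.1
    have ha1 : a ≠ 1 := by
      rintro rfl
      exact hxb.2 (by rw [← ha, map_one]; exact one_mem _)
    have hfst : w.fstIdx ≠ some b := by
      intro hf
      have : bs'.head? = some b := by
        rw [← hmap, List.head?_map]
        exact hf
      exact hhead b this rfl
    refine ⟨Monoid.CoprodI.Word.cons a w hfst ha1, ?_, ?_, ?_⟩
    · intro g hg
      have : g = ⟨b, a⟩ ∨ g ∈ w.toList := by
        simpa [Monoid.CoprodI.Word.cons] using hg
      rcases this with rfl | hg'
      · rintro ⟨c', hc'⟩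
        have hc'' : amalgHom φ ψ b c' = a := hc'
        exact hxb.2 ⟨c', by rw [← ha, ← hc'', PushoutI.of_apply_eq_base]⟩
      · exact hred g hg'
    · rw [Monoid.CoprodI.Word.prod_cons, map_mul, PushoutI.ofCoprodI_of, hprod, ha,
        List.prod_cons]
    · simpa [Monoid.CoprodI.Word.cons] using hmap

lemma prod_not_mem (hφ : Function.Injective φ) (hψ : Function.Injective ψ)
    {L : List (Amalg φ ψ)} {bs : List Bool}
    (h : List.Forall₂ (Ty φ ψ) L bs) (hch : bs.Chain' (· ≠ ·)) (hne : bs ≠ []) :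
    L.prod ∉ amalgC φ ψ := by
  intro hmem
  obtain ⟨w, hred, hprod, hmap⟩ := exists_word h hch
  have hw : w = .empty := hred.eq_empty_of_mem_range (hinj hφ hψ) (by rw [hprod]; exact hmem)
  subst hw
  exact hne (by simpa [Monoid.CoprodI.Word.empty] using hmap.symm)

lemma extend {x : Amalg φ ψ} {b b₂ : Bool} {M : List (Amalg φ ψ)} {cs : List Bool}
    (hxb : Ty φ ψ x b) (h1 : List.Forall₂ (Ty φ ψ) M cs) (h2 : cs.Chain' (· ≠ ·))
    (h4 : cs.head? = some b₂) (h5 : cs.getLast? = some b₂) (hbb : b ≠ b₂) :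
    List.Forall₂ (Ty φ ψ) (x :: (M ++ [x⁻¹])) (b :: (cs ++ [b])) ∧
    (b :: (cs ++ [b])).Chain' (· ≠ ·) ∧
    (x :: (M ++ [x⁻¹])).prod = x * M.prod * x⁻¹ := by
  have hxinv : Ty φ ψ x⁻¹ b :=
    ⟨inv_mem hxb.1, fun h => hxb.2 ((Subgroup.inv_mem_iff _).mp h)⟩
  refine ⟨?_, ?_, ?_⟩
  · exact List.Forall₂.cons hxb (List.rel_append h1
      (List.Forall₂.cons hxinv List.Forall₂.nil))
  · refine List.isChain_cons.mpr ⟨?_, ?_⟩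
    · intro y hy
      have hy' : b₂ = y := by
        simp only [List.head?_append, h4, Option.or_some, Option.some_or, Option.mem_def,
          Option.some.injEq] at hy
        exact hy
      subst hy'
      exact hbb
    · refine List.isChain_append.mpr ⟨h2, List.isChain_singleton _, ?_⟩
      intro y hy z hz
      have hy' : b₂ = y := by
        simp only [h5, Option.mem_def, Option.some.injEq] at hy
        exact hy
      have hz' : b = z := by
        simp only [List.head?_cons, Option.mem_def, Option.some.injEq] at hz
        exact hz
      subst hy'
      subst hz'
      exact hbb.symm
  · simp [List.prod_append, mul_assoc]

lemma conj_cases (hφ : Function.Injective φ) (hψ : Function.Injective ψ)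
    {L : List (Amalg φ ψ)} {bs : List Bool}
    (h : List.Forall₂ (Ty φ ψ) L bs) (hch : bs.Chain' (· ≠ ·))
    {c : Amalg φ ψ} (hc : c ∈ amalgC φ ψ) :
    L.prod * c * L.prod⁻¹ ∈ amalgC φ ψ ∨
    ∃ (M : List (Amalg φ ψ)) (cs : List Bool), List.Forall₂ (Ty φ ψ) M cs ∧
      cs.Chain' (· ≠ ·) ∧ L.prod * c * L.prod⁻¹ = M.prod ∧
      cs.head? = bs.head? ∧ cs.getLast? = bs.head? := by
  induction h with
  | nil => left; simpa using hc
  | @cons x b L' bs' hxb htail ih =>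
    obtain ⟨hhead, hch'⟩ := List.isChain_cons.mp hch
    have hu_eq : (x :: L').prod * c * ((x :: L').prod)⁻¹
        = x * (L'.prod * c * L'.prod⁻¹) * x⁻¹ := by
      rw [List.prod_cons]; group
    by_cases hv : L'.prod * c * L'.prod⁻¹ ∈ amalgC φ ψ
    · by_cases hu : (x :: L').prod * c * ((x :: L').prod)⁻¹ ∈ amalgC φ ψ
      · exact Or.inl hu
      · right
        refine ⟨[(x :: L').prod * c * ((x :: L').prod)⁻¹], [b], ?_, ?_, by simp, rfl, rfl⟩
        · refine List.Forall₂.cons ⟨?_, hu⟩ List.Forall₂.nil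
          rw [hu_eq]
          exact mul_mem (mul_mem hxb.1 (amalgC_le φ ψ b hv)) (inv_mem hxb.1)
        · exact List.isChain_singleton _
    · rcases ih hch' with hv' | ⟨M, cs, h1, h2, h3, h4, h5⟩
      · exact absurd hv' hv
      · -- bs' must be nonempty
        cases bs' with
        | nil =>
          exfalso
          rcases List.forall₂_nil_right_iff.mp htail with rfl
          exact hv (by simpa using hc)
        | cons b₂ bs'' =>
          have h4' : cs.head? = some b₂ := by simpa using h4
          have h5' : cs.getLast? = some b₂ := by simpa using h5
          have hbb : b ≠ b₂ := hhead b₂ (by simp) 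
          obtain ⟨hF, hC, hP⟩ := extend hxb h1 h2 h4' h5' hbb
          right
          refine ⟨x :: (M ++ [x⁻¹]), b :: (cs ++ [b]), hF, hC, ?_, rfl, ?_⟩
          · rw [hu_eq, h3, hP]
          · show (b :: (cs ++ [b])).getLast? = some b
            rw [← List.cons_append, List.getLast?_concat]

lemma suffix_conj (hφ : Function.Injective φ) (hψ : Function.Injective ψ)
    {L : List (Amalg φ ψ)} {bs : List Bool}
    (h : List.Forall₂ (Ty φ ψ) L bs) (hch : bs.Chain' (· ≠ ·))
    {c : Amalg φ ψ} (hc : c ∈ amalgC φ ψ)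
    (hu : L.prod * c * L.prod⁻¹ ∈ amalgC φ ψ) :
    ∀ i, (L.drop i).prod * c * ((L.drop i).prod)⁻¹ ∈ amalgC φ ψ := by
  induction h with
  | nil => intro i; simpa using hc
  | @cons x b L' bs' hxb htail ih =>
    obtain ⟨hhead, hch'⟩ := List.isChain_cons.mp hch
    have hu_eq : (x :: L').prod * c * ((x :: L').prod)⁻¹
        = x * (L'.prod * c * L'.prod⁻¹) * x⁻¹ := by
      rw [List.prod_cons]; group
    have hv : L'.prod * c * L'.prod⁻¹ ∈ amalgC φ ψ := by
      rcases conj_cases hφ hψ htail hch' hc with hv' | ⟨M, cs, h1, h2, h3, h4, h5⟩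
      · exact hv'
      · cases bs' with
        | nil =>
          rcases List.forall₂_nil_right_iff.mp htail with rfl
          simpa using hc
        | cons b₂ bs'' =>
          exfalso
          have h4' : cs.head? = some b₂ := by simpa using h4
          have h5' : cs.getLast? = some b₂ := by simpa using h5
          have hbb : b ≠ b₂ := hhead b₂ (by simp)
          obtain ⟨hF, hC, hP⟩ := extend hxb h1 h2 h4' h5' hbb
          refine prod_not_mem hφ hψ hF hC (by simp) ?_
          rw [hP, ← h3, ← hu_eq]
          exact hu
    intro i
    match i with
    | 0 => simpa using hu
    | i + 1 =>
      rw [List.drop_succ_cons]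
      exact ih hch' hv i

lemma exists_bs (hφ : Function.Injective φ) (hψ : Function.Injective ψ)
    {L : List (Amalg φ ψ)}
    (hmem : ∀ x ∈ L, (x ∈ facA φ ψ ∨ x ∈ facB φ ψ) ∧ x ∉ amalgC φ ψ)
    (hch : L.Chain' (fun x y => (x ∈ facA φ ψ → y ∈ facB φ ψ) ∧
      (x ∈ facB φ ψ → y ∈ facA φ ψ))) :
    ∃ bs : List Bool, List.Forall₂ (Ty φ ψ) L bs ∧ bs.Chain' (· ≠ ·) := by
  have hAB : ∀ z : Amalg φ ψ, z ∈ facA φ ψ → z ∈ facB φ ψ → z ∈ amalgC φ ψ := by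
    intro z h1 h2
    have := PushoutI.inf_of_range_eq_base_range (hinj hφ hψ)
      (show (true : Bool) ≠ false by simp)
    have h3 : z ∈ (PushoutI.of (φ := amalgHom φ ψ) true).range ⊓
        (PushoutI.of (φ := amalgHom φ ψ) false).range := ⟨h1, h2⟩
    rw [this] at h3
    exact h3
  induction L with
  | nil => exact ⟨[], List.Forall₂.nil, List.isChain_nil⟩
  | cons x L' ih =>
    obtain ⟨hx, hxC⟩ := hmem x (List.mem_cons_self)
    obtain ⟨bs', hF', hch''⟩ := ih (fun y hy => hmem y (List.mem_cons_of_mem _ hy))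
      (List.isChain_cons.mp hch).2
    by_cases hxA : x ∈ facA φ ψ
    · refine ⟨true :: bs', List.Forall₂.cons ⟨hxA, hxC⟩ hF', List.isChain_cons.mpr
        ⟨?_, hch''⟩⟩
      intro b₂ hb₂
      cases L' with
      | nil => rcases List.forall₂_nil_left_iff.mp hF' with rfl; simp at hb₂
      | cons y L'' =>
        rcases hF' with _ | ⟨hyb, _⟩
        simp only [List.head?_cons, Option.mem_def, Option.some.injEq] at hb₂
        subst hb₂
        intro hb
        subst hb
        have hcond := (List.isChain_cons_cons.mp hch).1
        exact hyb.2 (hAB y hyb.1 (hcond.1 hxA))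
    · have hxB : x ∈ facB φ ψ := hx.resolve_left hxA
      refine ⟨false :: bs', List.Forall₂.cons ⟨hxB, hxC⟩ hF', List.isChain_cons.mpr
        ⟨?_, hch''⟩⟩
      intro b₂ hb₂
      cases L' with
      | nil => rcases List.forall₂_nil_left_iff.mp hF' with rfl; simp at hb₂
      | cons y L'' =>
        rcases hF' with _ | ⟨hyb, _⟩
        simp only [List.head?_cons, Option.mem_def, Option.some.injEq] at hb₂
        subst hb₂
        intro hb
        rw [← hb] at hyb
        have hcond := (List.isChain_cons_cons.mp hch).1
        exact hyb.2 (hAB y (hcond.2 hxB) hyb.1)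

end AmalgAux

/-- If `g = c₀·p₁⋯p_k` is a reduced form (`k ≥ 1`) and `c ∈ C` with `g c g⁻¹ ∈ C`, then every
suffix `p_i⋯p_k` conjugates `c` into `C`; moreover if `c ≠ 1` then every syllable `p_i`
satisfies `C ∩ p_i⁻¹ C p_i ≠ {1}` and some `q ∈ (A ∪ B) ∖ C` conjugates `c` into `C`. -/
theorem bad_pair_system
    (hφ : Function.Injective φ) (hψ : Function.Injective ψ)
    (c₀ c : Amalg φ ψ) (L : List (Amalg φ ψ))
    (hL : ReducedForm φ ψ c₀ L) (hk : 1 ≤ L.length)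
    (hc : c ∈ amalgC φ ψ)
    (hbad : (c₀ * L.prod) * c * (c₀ * L.prod)⁻¹ ∈ amalgC φ ψ) :
    (∀ i < L.length, (L.drop i).prod * c * ((L.drop i).prod)⁻¹ ∈ amalgC φ ψ) ∧
    (c ≠ 1 →
      (∀ p ∈ L, ∃ d : Amalg φ ψ, d ∈ amalgC φ ψ ∧ d ≠ 1 ∧ p * d * p⁻¹ ∈ amalgC φ ψ) ∧
      (∃ q : Amalg φ ψ, (q ∈ facA φ ψ ∨ q ∈ facB φ ψ) ∧ q ∉ amalgC φ ψ ∧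
        q * c * q⁻¹ ∈ amalgC φ ψ)) := by
  obtain ⟨bs, hF, hch⟩ := AmalgAux.exists_bs hφ hψ hL.2.1 hL.2.2
  have hc₀ := hL.1
  have hu : L.prod * c * L.prod⁻¹ ∈ amalgC φ ψ := by
    have heq : L.prod * c * L.prod⁻¹
        = c₀⁻¹ * ((c₀ * L.prod) * c * (c₀ * L.prod)⁻¹) * c₀ := by group
    rw [heq]
    exact mul_mem (mul_mem (inv_mem hc₀) hbad) hc₀
  have key := AmalgAux.suffix_conj hφ hψ hF hch hc hu
  refine ⟨fun i _ => key i, fun hc1 => ⟨?_, ?_⟩⟩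
  · intro p hp
    obtain ⟨i, hi, rfl⟩ := List.getElem_of_mem hp
    refine ⟨(L.drop (i + 1)).prod * c * ((L.drop (i + 1)).prod)⁻¹, key (i + 1), ?_, ?_⟩
    · intro h
      apply hc1
      have hceq : c = ((L.drop (i + 1)).prod)⁻¹ *
          ((L.drop (i + 1)).prod * c * ((L.drop (i + 1)).prod)⁻¹) * (L.drop (i + 1)).prod := by
        group
      rw [hceq, h, mul_one, inv_mul_cancel]
    · have hdrop : L.drop i = L[i] :: L.drop (i + 1) := List.drop_eq_getElem_cons hi
      have heq : L[i] * ((L.drop (i + 1)).prod * c * ((L.drop (i + 1)).prod)⁻¹) * L[i]⁻¹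
          = (L.drop i).prod * c * ((L.drop i).prod)⁻¹ := by
        rw [hdrop, List.prod_cons]
        group
      rw [heq]
      exact key i
  · have hi : L.length - 1 < L.length := by omega
    refine ⟨L[L.length - 1], (hL.2.1 _ (List.getElem_mem hi)).1,
      (hL.2.1 _ (List.getElem_mem hi)).2, ?_⟩
    have hdrop : L.drop (L.length - 1) = L[L.length - 1] :: L.drop (L.length - 1 + 1) :=
      List.drop_eq_getElem_cons hi
    have hnil : L.drop (L.length - 1 + 1) = [] := List.drop_eq_nil_of_le (by omega)
    have := key (L.length - 1)
    rw [hdrop, hnil, List.prod_cons, List.prod_nil, mul_one] at this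
    exact this
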